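/- Let σ be the signal orderings induced by value functions v. Suppose that for every family σ̃ = (σ̃_i(s_{-i}))_{i, s_{-i}} in which each σ̃_i(s_{-i}) is a strict total order on [k] (irreflexive, transitive, and for all a ≠ b either (a,b) ∈ σ̃_i(s_{-i}) or (b,a) ∈ σ̃_i(s_{-i})) extending σ (σ_i(s_{-i}) ⊆ σ̃_i(s_{-i}) for all i, s_{-i}), every extreme point of T(σ̃) is integral. Then every extreme point of T(σ) is integral. -/
import Mathlib


namespace Stmt6

variable {n k : ℕ}

/-- The profile obtained from the sub-profile `t` (signals of agents other than `i`)
by giving agent `i` the signal `a`. -/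
def extendProf (i : Fin n) (a : Fin k) (t : {j : Fin n // j ≠ i} → Fin k) : Fin n → Fin k :=
  fun j => if h : j = i then a else t ⟨j, h⟩

/-- Membership in the truthful polytope `T(τ)` for a family `τ` of binary relations on
signals, indexed by an agent and the signals of the other agents. -/
def InT (τ : (i : Fin n) → ({j : Fin n // j ≠ i} → Fin k) → Fin k → Fin k → Prop)
    (x : Fin n → (Fin n → Fin k) → ℝ) : Prop :=
  (∀ i s, 0 ≤ x i s ∧ x i s ≤ 1) ∧ (∀ s, ∑ i, x i s = 1) ∧
  (∀ (i : Fin n) (t : {j : Fin n // j ≠ i} → Fin k) (a b : Fin k),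
    τ i t a b → x i (extendProf i a t) ≤ x i (extendProf i b t))

/-- The signal orderings induced by value functions `v`. -/
def sigmaOf (v : Fin n → (Fin n → Fin k) → ℝ) :
    (i : Fin n) → ({j : Fin n // j ≠ i} → Fin k) → Fin k → Fin k → Prop :=
  fun i t a b => v i (extendProf i a t) < v i (extendProf i b t)

/-- if every extreme point of `T(σ̃)` is integral for every family `σ̃` of
strict total orders extending the orderings `σ` induced by `v`, then every extreme point
of `T(σ)` is integral. -/
theorem stmt6 (v : Fin n → (Fin n → Fin k) → ℝ) (hv : ∀ i s, 0 < v i s)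
    (H : ∀ τ : (i : Fin n) → ({j : Fin n // j ≠ i} → Fin k) → Fin k → Fin k → Prop,
      (∀ i t a, ¬ τ i t a a) →
      (∀ i t a b c, τ i t a b → τ i t b c → τ i t a c) →
      (∀ i t a b, a ≠ b → τ i t a b ∨ τ i t b a) →
      (∀ i t a b, sigmaOf v i t a b → τ i t a b) →
      ∀ y ∈ Set.extremePoints ℝ {x : Fin n → (Fin n → Fin k) → ℝ | InT τ x},
        ∀ i s, y i s = 0 ∨ y i s = 1) :
    ∀ y ∈ Set.extremePoints ℝ {x : Fin n → (Fin n → Fin k) → ℝ | InT (sigmaOf v) x},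
      ∀ i s, y i s = 0 ∨ y i s = 1 := by
  intro y hy
  -- tie-breaking total order: first by v, then by y, then by index
  set τ : (i : Fin n) → ({j : Fin n // j ≠ i} → Fin k) → Fin k → Fin k → Prop :=
    fun i t a b =>
      v i (extendProf i a t) < v i (extendProf i b t) ∨
      (v i (extendProf i a t) = v i (extendProf i b t) ∧
        (y i (extendProf i a t) < y i (extendProf i b t) ∨
         (y i (extendProf i a t) = y i (extendProf i b t) ∧ a < b))) with hτ
  have hyσ : InT (sigmaOf v) y := hy.1
  have sub : ∀ x, InT τ x → InT (sigmaOf v) x := by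
    intro x hx
    exact ⟨hx.1, hx.2.1, fun i t a b hσ => hx.2.2 i t a b (Or.inl hσ)⟩
  have hyτ : InT τ y := by
    refine ⟨hyσ.1, hyσ.2.1, ?_⟩
    intro i t a b hab
    rcases hab with h | ⟨e, h | ⟨e2, _⟩⟩
    · exact hyσ.2.2 i t a b h
    · exact le_of_lt h
    · exact le_of_eq e2
  refine H τ ?_ ?_ ?_ ?_ y ?_
  · intro i t a h
    rcases h with h | ⟨e, h | ⟨e2, h3⟩⟩
    · exact lt_irrefl _ h
    · exact lt_irrefl _ h
    · exact lt_irrefl _ h3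
  · intro i t a b c hab hbc
    rcases hab with h | ⟨e, h'⟩ <;> rcases hbc with g | ⟨f, g'⟩
    · exact Or.inl (h.trans g)
    · exact Or.inl (h.trans_le f.le)
    · exact Or.inl (lt_of_eq_of_lt e g)
    · refine Or.inr ⟨e.trans f, ?_⟩
      rcases h' with h | ⟨e2, h3⟩ <;> rcases g' with g | ⟨f2, g3⟩
      · exact Or.inl (h.trans g)
      · exact Or.inl (h.trans_le f2.le)
      · exact Or.inl (lt_of_eq_of_lt e2 g)
      · exact Or.inr ⟨e2.trans f2, h3.trans g3⟩
  · intro i t a b hab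
    rcases lt_trichotomy (v i (extendProf i a t)) (v i (extendProf i b t)) with h | h | h
    · exact Or.inl (Or.inl h)
    · rcases lt_trichotomy (y i (extendProf i a t)) (y i (extendProf i b t)) with g | g | g
      · exact Or.inl (Or.inr ⟨h, Or.inl g⟩)
      · rcases hab.lt_or_gt with l | l
        · exact Or.inl (Or.inr ⟨h, Or.inr ⟨g, l⟩⟩)
        · exact Or.inr (Or.inr ⟨h.symm, Or.inr ⟨g.symm, l⟩⟩)
      · exact Or.inr (Or.inr ⟨h.symm, Or.inl g⟩)
    · exact Or.inr (Or.inl h)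
  · intro i t a b hσ
    exact Or.inl hσ
  · exact ⟨hyτ, fun x1 hx1 x2 hx2 hseg =>
      hy.2 (sub x1 hx1) (sub x2 hx2) hseg⟩

end Stmt6
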